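/- Let j ≥ 0 be a half-integer, m₁, m₂, n half-integers with j+m₁, j+m₂, j+n ∈ ℤ and −j ≤ m₁, m₂ ≤ j, let λ > 0 be real, and let p be an integer with max(0, m₁−m₂) ≤ p ≤ min(j−m₂, j+m₁). Define ω : ℂ × ℝ → ℂ by ω(z,w) = z^p · conj(z)^{−m₁+m₂+p} · (−1+|z|²+2iw)^{j+m₁−p} · (−1+|z|²−2iw)^{j−m₂−p} · (1+|z|²−2iw)^{(−2j−m₂+n−λ−2)/2} · (1+|z|²+2iw)^{(−2j+m₂−n−λ−2)/2}, where all integer powers are the usual ones and the last two powers are principal-branch complex powers (well defined since Re(1+|z|²∓2iw) > 0). If m₁ ≠ m₂, then the integral of ω(x+iy, w) over (x,y,w) ∈ ℝ³ equals 0. -/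

import Mathlib

open MeasureTheory

/-- A half-integer is an element of `(1/2)ℤ`. -/
def HalfInt (x : ℝ) : Prop := ∃ k : ℤ, x = k / 2

/-- The summand `ω^{(j,n)}_{m₁,m₂}(p; z, w) = z^p conj(z)^{−m₁+m₂+p}
(−1+|z|²+2iw)^{j+m₁−p} (−1+|z|²−2iw)^{j−m₂−p} (1+|z|²−2iw)^{(−2j−m₂+n−λ−2)/2}
(1+|z|²+2iw)^{(−2j+m₂−n−λ−2)/2}` appearing in the expansion of the
intertwining-operator integrand for `SU(2,1)`; the last two powers are
principal-branch complex powers. -/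
noncomputable def omegaZ (j m₁ m₂ n lam : ℝ) (p : ℤ) (z : ℂ) (w : ℝ) : ℂ :=
  z ^ p * ((starRingEnd ℂ) z) ^ (⌊-m₁ + m₂⌋ + p) *
    (-1 + ((‖z‖ : ℝ) : ℂ) ^ 2 + 2 * Complex.I * (w : ℂ)) ^ (⌊j + m₁⌋ - p) *
    (-1 + ((‖z‖ : ℝ) : ℂ) ^ 2 - 2 * Complex.I * (w : ℂ)) ^ (⌊j - m₂⌋ - p) *
    (1 + ((‖z‖ : ℝ) : ℂ) ^ 2 - 2 * Complex.I * (w : ℂ)) ^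
      ((((-2 * j - m₂ + n - lam - 2) / 2 : ℝ) : ℂ)) *
    (1 + ((‖z‖ : ℝ) : ℂ) ^ 2 + 2 * Complex.I * (w : ℂ)) ^
      ((((-2 * j + m₂ - n - lam - 2) / 2 : ℝ) : ℂ))

private lemma aux_rearrange (a b x y A B C D E : ℂ) (h : a * b = E) :
    a * x * (b * y) * A * B * C * D = E * (x * y * A * B * C * D) := by
  rw [← h]; ring

/-- For `m₁ ≠ m₂` the integral of `ω^{(j,n)}_{m₁,m₂}(p; x+iy, w)` over `(x,y,w) ∈ ℝ³`
vanishes: the long intertwining operator acts diagonally on each `K`-type. -/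
theorem su21_off_diagonal_vanishes (j m₁ m₂ n lam : ℝ) (p : ℤ)
    (hj : HalfInt j) (hj0 : 0 ≤ j) (hm₁ : HalfInt m₁) (hm₂ : HalfInt m₂) (hn : HalfInt n)
    (hjm₁ : ∃ a : ℤ, j + m₁ = a) (hjm₂ : ∃ a : ℤ, j + m₂ = a) (hjn : ∃ a : ℤ, j + n = a)
    (hm₁l : -j ≤ m₁) (hm₁u : m₁ ≤ j) (hm₂l : -j ≤ m₂) (hm₂u : m₂ ≤ j)
    (hlam : 0 < lam)
    (hpl : max 0 ⌊m₁ - m₂⌋ ≤ p) (hpu : p ≤ min ⌊j - m₂⌋ ⌊j + m₁⌋)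
    (hne : m₁ ≠ m₂) :
    ∫ q : ℝ × ℝ × ℝ, omegaZ j m₁ m₂ n lam p ((q.1 : ℂ) + (q.2.1 : ℂ) * Complex.I) q.2.2 = 0 := by
  obtain ⟨a₁, ha₁⟩ := hjm₁
  obtain ⟨a₂, ha₂⟩ := hjm₂
  set k : ℤ := a₁ - a₂ with hkdef
  have hk : m₁ - m₂ = (k : ℝ) := by push_cast [hkdef]; linarith
  have hk0 : k ≠ 0 := by
    intro h
    apply hne
    have : m₁ - m₂ = 0 := by rw [hk, h]; simp
    linarith
  have hfloor : ⌊-m₁ + m₂⌋ = -k := by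
    have : -m₁ + m₂ = ((-k : ℤ) : ℝ) := by push_cast; linarith
    rw [this, Int.floor_intCast]
  set u : Circle := Circle.exp (Real.pi / k) with hudef
  set c : ℂ := (u : ℂ) with hcdef
  have hc0 : c ≠ 0 := Circle.coe_ne_zero u
  have habs : ‖c‖ = 1 := Circle.norm_coe u
  have hconj : (starRingEnd ℂ) c = c⁻¹ := by
    rw [Complex.inv_eq_conj (by rw [habs])]
  have hck : c ^ k = -1 := by
    rw [hcdef, hudef, Circle.coe_exp, ← Complex.exp_int_mul]
    rw [show ((k : ℂ) * ((Real.pi / k : ℝ) * Complex.I)) = (Real.pi : ℂ) * Complex.I by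
      have : (k : ℂ) ≠ 0 := Int.cast_ne_zero.mpr hk0
      push_cast
      field_simp]
    exact Complex.exp_pi_mul_I
  -- functional equation under rotation
  have hrot : ∀ (z : ℂ) (w : ℝ),
      omegaZ j m₁ m₂ n lam p (c * z) w = c ^ k * omegaZ j m₁ m₂ n lam p z w := by
    intro z w
    have h1 : ‖c * z‖ = ‖z‖ := by
      rw [norm_mul, habs, one_mul]
    have hcp : c ^ p * c ^ (-(-k + p)) = c ^ k := by
      rw [← zpow_add₀ hc0]; ring_nf
    simp only [omegaZ, h1, map_mul, mul_zpow, hfloor, hconj, inv_zpow, ← zpow_neg]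
    exact aux_rearrange _ _ _ _ _ _ _ _ _ hcp
  -- change of variables ℝ³ ≃ ℂ × ℝ
  set g : ℂ × ℝ → ℂ := fun zw => omegaZ j m₁ m₂ n lam p zw.1 zw.2 with hgdef
  set e : ℂ × ℝ ≃ᵐ ℝ × ℝ × ℝ :=
    (Complex.measurableEquivRealProd.prodCongr (MeasurableEquiv.refl ℝ)).trans
      MeasurableEquiv.prodAssoc with hedef
  have he : MeasurePreserving e := by
    have h1 : MeasurePreserving
        (Prod.map (⇑Complex.measurableEquivRealProd) (id : ℝ → ℝ)) :=
      Complex.volume_preserving_equiv_real_prod.prod (MeasurePreserving.id _)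
    exact (MeasureTheory.volume_preserving_prodAssoc).comp h1
  have hI1 : (∫ q : ℝ × ℝ × ℝ,
      omegaZ j m₁ m₂ n lam p ((q.1 : ℂ) + (q.2.1 : ℂ) * Complex.I) q.2.2)
      = ∫ zw : ℂ × ℝ, g zw := by
    rw [← he.integral_comp e.measurableEmbedding]
    refine integral_congr_ae (Filter.Eventually.of_forall fun zw => ?_)
    show omegaZ j m₁ m₂ n lam p ((zw.1.re : ℂ) + (zw.1.im : ℂ) * Complex.I) zw.2 = g zw
    rw [Complex.re_add_im]
  -- rotation invariance
  set R : ℂ × ℝ ≃ᵐ ℂ × ℝ :=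
    ((rotation u).toMeasurableEquiv).prodCongr (MeasurableEquiv.refl ℝ) with hRdef
  have hR : MeasurePreserving R :=
    ((rotation u).measurePreserving).prod (MeasurePreserving.id _)
  have hI2 : (∫ zw : ℂ × ℝ, g zw) = c ^ k * ∫ zw : ℂ × ℝ, g zw := by
    conv_lhs => rw [← hR.integral_comp R.measurableEmbedding g]
    have : ∀ zw : ℂ × ℝ, g (R zw) = c ^ k * g zw := by
      intro zw
      show g ((rotation u) zw.1, zw.2) = c ^ k * g zw
      rw [rotation_apply]
      exact hrot zw.1 zw.2
    simp_rw [this]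
    exact integral_const_mul _ _
  have hzero : (∫ zw : ℂ × ℝ, g zw) = 0 := by
    rw [hck] at hI2
    have := hI2
    linear_combination (1 / 2 : ℂ) * this
  rw [hI1, hzero]
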